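/- arXiv:1203.1704 — 2 statements merged into one kernel-verified Lean document; each statement's English description precedes it below -/
import Mathlib

section
/- With the Newton map identities, (ε_{Γ₁} ∘ δ_{Γ₁,j})(z^p - μ_j x^q) = y^{p q'} (z₁^p - μ_j^{up}), where p_i q_i = p q'_i for each i (i.e., p*q = p·q' componentwise), and consequently (τ_j ∘ ε_{Γ₁} ∘ δ_{Γ₁,j})(z^p - μ_j x^q) = y^{p*q} ((z₂ + μ_j^u)^p - μ_j^{up}), which is of order one in z₂. -/
open Polynomial

attribute [local instance] Classical.propDecidable

variable {k : Type*} [Field k] [IsAlgClosed k] [CharZero k] {d : ℕ}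

/-- The coefficient substitution `x_i ↦ μ^{u_i} y_i^{p_i}` on power series, i.e. the effect
of `ε_{Γ₁} ∘ δ_{Γ₁,j}` on coefficients: the coefficient of `y^α` in the image is
`μ^{Σ u_i α_i/p_i}` times the coefficient of `x^{α/p}` when `p ∣ α` componentwise. -/
noncomputable def substCoeff (μ : k) (u pvec : Fin d → ℕ)
    (c : MvPowerSeries (Fin d) k) : MvPowerSeries (Fin d) k :=
  fun α : Fin d →₀ ℕ =>
    if ∀ i, pvec i ∣ α i then
      μ ^ (∑ i, u i * (α i / pvec i)) *
        MvPowerSeries.coeff (R := k) (Finsupp.equivFunOnFinite.symm fun i => α i / pvec i) c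
    else 0

/-- The Newton map `σ_{Γ₁,j} = τ_j ∘ ε_{Γ₁} ∘ δ_{Γ₁,j}` applied to
`h ∈ k[[x]][z]`: substitute `x_i ↦ μ^{u_i} y_i^{p_i}` and `z ↦ y^{q'}(z₂ + μ^u)`. -/
noncomputable def newtonMap (μ : k) (u pvec q' : Fin d → ℕ) (uu : ℕ)
    (h : Polynomial (MvPowerSeries (Fin d) k)) : Polynomial (MvPowerSeries (Fin d) k) :=
  h.sum fun n c =>
    Polynomial.C (substCoeff μ u pvec c) *
      (Polynomial.C ((MvPowerSeries.monomial (R := k) (Finsupp.equivFunOnFinite.symm q')) 1) *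
        (Polynomial.X + Polynomial.C ((MvPowerSeries.C (σ := Fin d) (R := k)) (μ ^ uu)))) ^ n


/-- The map `ε_{Γ₁} ∘ δ_{Γ₁,j}` applied to `h ∈ k[[x]][z]`: substitute
`x_i ↦ μ^{u_i} y_i^{p_i}` and `z ↦ y^{q'} z₁`. -/
noncomputable def epsDeltaMap (μ : k) (u pvec q' : Fin d → ℕ)
    (h : Polynomial (MvPowerSeries (Fin d) k)) : Polynomial (MvPowerSeries (Fin d) k) :=
  h.sum fun n c =>
    Polynomial.C (substCoeff μ u pvec c) *
      (Polynomial.C ((MvPowerSeries.monomial (R := k) (Finsupp.equivFunOnFinite.symm q')) 1) *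
        Polynomial.X) ^ n

lemma coeff_substCoeff (μ : k) (u pvec : Fin d → ℕ) (c : MvPowerSeries (Fin d) k)
    (α : Fin d →₀ ℕ) :
    MvPowerSeries.coeff (R := k) α (substCoeff μ u pvec c) =
      if ∀ i, pvec i ∣ α i then
        μ ^ (∑ i, u i * (α i / pvec i)) *
          MvPowerSeries.coeff (R := k) (Finsupp.equivFunOnFinite.symm fun i => α i / pvec i) c
      else 0 := rfl

lemma substCoeff_zero (μ : k) (u pvec : Fin d → ℕ) :
    substCoeff μ u pvec (0 : MvPowerSeries (Fin d) k) = 0 := by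
  ext α
  rw [coeff_substCoeff]
  simp

lemma substCoeff_add (μ : k) (u pvec : Fin d → ℕ) (c c' : MvPowerSeries (Fin d) k) :
    substCoeff μ u pvec (c + c') = substCoeff μ u pvec c + substCoeff μ u pvec c' := by
  ext α
  rw [map_add, coeff_substCoeff, coeff_substCoeff, coeff_substCoeff]
  split <;> simp [map_add, mul_add]

lemma substCoeff_neg (μ : k) (u pvec : Fin d → ℕ) (c : MvPowerSeries (Fin d) k) :
    substCoeff μ u pvec (-c) = - substCoeff μ u pvec c := by
  ext α
  rw [map_neg, coeff_substCoeff, coeff_substCoeff]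
  split <;> simp [mul_comm]

lemma substCoeff_monomial (μ : k) (u pvec : Fin d → ℕ) (hpvec : ∀ i, 0 < pvec i)
    (β : Fin d →₀ ℕ) (a : k) :
    substCoeff μ u pvec (MvPowerSeries.monomial (R := k) β a) =
      MvPowerSeries.monomial (R := k) (Finsupp.equivFunOnFinite.symm fun i => pvec i * β i)
        (μ ^ (∑ i, u i * β i) * a) := by
  ext α
  rw [coeff_substCoeff, MvPowerSeries.coeff_monomial, MvPowerSeries.coeff_monomial]
  have hcoe : ∀ (f : Fin d → ℕ) (i : Fin d),
      (Finsupp.equivFunOnFinite.symm f) i = f i := fun f i => rfl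
  by_cases hα : α = Finsupp.equivFunOnFinite.symm fun i => pvec i * β i
  · subst hα
    have hdvd : ∀ i, pvec i ∣ (Finsupp.equivFunOnFinite.symm fun i => pvec i * β i) i := by
      intro i; rw [hcoe]; exact Dvd.intro _ rfl
    rw [if_pos hdvd, if_pos rfl]
    have hdiv : ∀ i, (Finsupp.equivFunOnFinite.symm fun i => pvec i * β i) i / pvec i = β i := by
      intro i; rw [hcoe]; exact Nat.mul_div_cancel_left _ (hpvec i)
    have hfs : (Finsupp.equivFunOnFinite.symm fun i =>
        (Finsupp.equivFunOnFinite.symm fun i => pvec i * β i) i / pvec i) = β := by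
      apply Finsupp.ext; intro i; rw [hcoe, hdiv]
    rw [hfs, if_pos rfl]
    congr 2
    exact Finset.sum_congr rfl fun i _ => by rw [hdiv]
  · rw [if_neg hα]
    by_cases hdvd : ∀ i, pvec i ∣ α i
    · rw [if_pos hdvd]
      have hne : (Finsupp.equivFunOnFinite.symm fun i => α i / pvec i) ≠ β := by
        intro h
        apply hα
        apply Finsupp.ext; intro i
        rw [hcoe]
        have : α i / pvec i = β i := by
          rw [← h, hcoe]
        rw [← this]; exact (Nat.mul_div_cancel' (hdvd i)).symm
      rw [if_neg hne, mul_zero]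
    · rw [if_neg hdvd]

lemma substCoeff_one (μ : k) (u pvec : Fin d → ℕ) (hpvec : ∀ i, 0 < pvec i) :
    substCoeff μ u pvec (1 : MvPowerSeries (Fin d) k) = 1 := by
  rw [← MvPowerSeries.monomial_zero_one (σ := Fin d) (R := k),
    substCoeff_monomial μ u pvec hpvec]
  have h1 : (Finsupp.equivFunOnFinite.symm fun i => pvec i * (0 : Fin d →₀ ℕ) i)
      = (0 : Fin d →₀ ℕ) := by
    apply Finsupp.ext; intro i; simp
  have h2 : (∑ i, u i * (0 : Fin d →₀ ℕ) i) = 0 := by simp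
  rw [h1, h2, pow_zero, one_mul]

lemma monomial_one_pow (β : Fin d →₀ ℕ) (n : ℕ) :
    (MvPowerSeries.monomial (R := k) β (1 : k)) ^ n = MvPowerSeries.monomial (R := k) (n • β) 1 := by
  induction n with
  | zero => simp [MvPowerSeries.monomial_zero_one]
  | succ n ih =>
      rw [pow_succ, ih, MvPowerSeries.monomial_mul_monomial, succ_nsmul, mul_one]

lemma sum_X_pow_sub_C {R : Type*} [CommRing R] {S : Type*} [AddCommGroup S]
    (p : ℕ) (hp : 0 < p) (m : R) (f : ℕ → R → S)
    (hf0 : ∀ n, f n 0 = 0) (hadd : ∀ n a b, f n (a + b) = f n a + f n b) :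
    (Polynomial.X ^ p - Polynomial.C m).sum f = f p 1 + f 0 (-m) := by
  rw [sub_eq_add_neg, ← map_neg Polynomial.C]
  rw [Polynomial.sum_add_index _ _ _ hf0 hadd, Polynomial.X_pow_eq_monomial,
    Polynomial.sum_monomial_index _ _ (hf0 p), Polynomial.sum_C_index (hf0 0)]

/-- the Newton map identities
`(ε∘δ)(z^p - μ x^q) = y^{pq'}(z₁^p - μ^{up})` with `p_i q_i = p q'_i`, hence
`(τ∘ε∘δ)(z^p - μ x^q) = y^{p*q}((z₂+μ^u)^p - μ^{up})`, of order one in `z₂`. -/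
theorem newtonMap_identities (p : ℕ) (hp : 0 < p) (q : Fin d → ℕ)
    (hgcd : Nat.gcd p (Finset.univ.gcd q) = 1)
    (pvec q' : Fin d → ℕ)
    (hpvec : ∀ i, pvec i = p / Nat.gcd p (q i)) (hq' : ∀ i, q' i = q i / Nat.gcd p (q i))
    (u : Fin d → ℕ) (uu : ℕ) (hu : 1 + ∑ i, u i * q i = uu * p)
    (μ : k) (hμ : μ ≠ 0) :
    (∀ i, pvec i * q i = p * q' i) ∧
    epsDeltaMap μ u pvec q'
        (Polynomial.X ^ p -
          Polynomial.C ((MvPowerSeries.monomial (R := k) (Finsupp.equivFunOnFinite.symm q)) μ))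
      = Polynomial.C
          ((MvPowerSeries.monomial (R := k) (Finsupp.equivFunOnFinite.symm fun i => p * q' i)) 1) *
          (Polynomial.X ^ p - Polynomial.C ((MvPowerSeries.C (σ := Fin d) (R := k)) (μ ^ (uu * p)))) ∧
    _root_.newtonMap μ u pvec q' uu
        (Polynomial.X ^ p -
          Polynomial.C ((MvPowerSeries.monomial (R := k) (Finsupp.equivFunOnFinite.symm q)) μ))
      = Polynomial.C
          ((MvPowerSeries.monomial (R := k) (Finsupp.equivFunOnFinite.symm fun i => pvec i * q i)) 1) *
          ((Polynomial.X + Polynomial.C ((MvPowerSeries.C (σ := Fin d) (R := k)) (μ ^ uu))) ^ p -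
            Polynomial.C ((MvPowerSeries.C (σ := Fin d) (R := k)) (μ ^ (uu * p)))) ∧
    ((Polynomial.X + Polynomial.C (μ ^ uu)) ^ p - Polynomial.C (μ ^ (uu * p))
        : Polynomial k).coeff 0 = 0 ∧
    ((Polynomial.X + Polynomial.C (μ ^ uu)) ^ p - Polynomial.C (μ ^ (uu * p))
        : Polynomial k).coeff 1 ≠ 0 := by
  have hpvecpos : ∀ i, 0 < pvec i := by
    intro i
    rw [hpvec i]
    exact Nat.div_pos (Nat.le_of_dvd hp (Nat.gcd_dvd_left p (q i)))
      (Nat.gcd_pos_of_pos_left (q i) hp)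
  have part1 : ∀ i, pvec i * q i = p * q' i := by
    intro i
    have hc : 0 < Nat.gcd p (q i) := Nat.gcd_pos_of_pos_left (q i) hp
    have hpv : pvec i * Nat.gcd p (q i) = p := by
      rw [hpvec i]; exact Nat.div_mul_cancel (Nat.gcd_dvd_left p (q i))
    have hqv : q' i * Nat.gcd p (q i) = q i := by
      rw [hq' i]; exact Nat.div_mul_cancel (Nat.gcd_dvd_right p (q i))
    calc pvec i * q i = pvec i * (q' i * Nat.gcd p (q i)) := by rw [hqv]
      _ = pvec i * Nat.gcd p (q i) * q' i := by ring
      _ = p * q' i := by rw [hpv]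
  have key : (Finsupp.equivFunOnFinite.symm fun i => pvec i * q i)
      = (Finsupp.equivFunOnFinite.symm fun i => p * q' i) := by
    congr 1; funext i; exact part1 i
  have hmu : μ ^ (∑ i, u i * q i) * μ = μ ^ (uu * p) := by
    rw [← pow_succ]; congr 1; omega
  have hsubm : substCoeff μ u pvec
        ((MvPowerSeries.monomial (R := k) (Finsupp.equivFunOnFinite.symm q)) μ)
      = MvPowerSeries.monomial (R := k) (Finsupp.equivFunOnFinite.symm fun i => p * q' i)
          (μ ^ (uu * p)) := by
    rw [substCoeff_monomial μ u pvec hpvecpos]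
    have hc : ∀ i, (Finsupp.equivFunOnFinite.symm q) i = q i := fun i => rfl
    simp only [hc]
    rw [hmu, key]
  have hsmul : p • (Finsupp.equivFunOnFinite.symm q')
      = Finsupp.equivFunOnFinite.symm fun i => p * q' i := by
    apply Finsupp.ext; intro i
    simp only [Finsupp.smul_apply, smul_eq_mul]
    rfl
  have hmonC : (MvPowerSeries.monomial (R := k)
        (Finsupp.equivFunOnFinite.symm fun i => p * q' i) (1 : k)) *
        (MvPowerSeries.C (σ := Fin d) (R := k)) (μ ^ (uu * p))
      = MvPowerSeries.monomial (R := k) (Finsupp.equivFunOnFinite.symm fun i => p * q' i)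
          (μ ^ (uu * p)) := by
    rw [← MvPowerSeries.monomial_zero_eq_C_apply, MvPowerSeries.monomial_mul_monomial,
      add_zero, one_mul]
  have hf0 : ∀ (B : Polynomial (MvPowerSeries (Fin d) k)) (n : ℕ),
      Polynomial.C (substCoeff μ u pvec 0) * B ^ n = 0 := by
    intro B n; rw [substCoeff_zero, map_zero, zero_mul]
  have hfadd : ∀ (B : Polynomial (MvPowerSeries (Fin d) k)) (n : ℕ)
      (a b : MvPowerSeries (Fin d) k),
      Polynomial.C (substCoeff μ u pvec (a + b)) * B ^ n =
        Polynomial.C (substCoeff μ u pvec a) * B ^ n +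
          Polynomial.C (substCoeff μ u pvec b) * B ^ n := by
    intro B n a b; rw [substCoeff_add, map_add, add_mul]
  refine ⟨part1, ?_, ?_, ?_, ?_⟩
  · rw [epsDeltaMap, sum_X_pow_sub_C p hp _ _ (hf0 _) (hfadd _)]
    rw [substCoeff_one μ u pvec hpvecpos, substCoeff_neg, hsubm, map_one, one_mul,
      pow_zero, mul_one, map_neg, mul_pow, ← map_pow, monomial_one_pow, hsmul,
      mul_sub, ← map_mul, hmonC]
    ring
  · rw [_root_.newtonMap, sum_X_pow_sub_C p hp _ _ (hf0 _) (hfadd _)]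
    rw [substCoeff_one μ u pvec hpvecpos, substCoeff_neg, hsubm, map_one, one_mul,
      pow_zero, mul_one, map_neg, mul_pow, ← map_pow, monomial_one_pow, hsmul, key,
      mul_sub, ← map_mul, hmonC]
    ring
  · rw [Polynomial.coeff_sub, Polynomial.coeff_X_add_C_pow, Polynomial.coeff_C]
    simp [pow_mul]
  · rw [Polynomial.coeff_sub, Polynomial.coeff_X_add_C_pow, Polynomial.coeff_C]
    simp only [if_neg one_ne_zero, sub_zero, Nat.choose_one_right]
    exact mul_ne_zero (pow_ne_zero _ (pow_ne_zero _ hμ))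
      (Nat.cast_ne_zero.mpr hp.ne')
end

section
/- Separated implies comparable: if two polynomials f, g ∈ k[[x]][z] are separated (there is a suitable coordinate system in which all ends of the bicoloured Newton tree of fg that are not dead-ends are monochromatic), then their resultant Res_z(f,g)(x) equals x^α·η(x) with α ∈ ℕ^d and η(0) ≠ 0; in the special case d = 1, two reduced plane curve germs f, g ∈ k[[x]][z] without common component have Res_z(f,g)(x) = x^α·η(x) with η(0) ≠ 0. -/
open Polynomial

set_option maxHeartbeats 1000000
set_option synthInstance.maxHeartbeats 1000000

variable {k : Type*} [Field k] [IsAlgClosed k] [CharZero k]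

/-- The Sylvester matrix of two polynomials `f`, `g` over a commutative ring. -/
noncomputable def sylvesterMatrix {R : Type*} [CommRing R] (f g : R[X]) :
    Matrix (Fin (f.natDegree + g.natDegree)) (Fin (f.natDegree + g.natDegree)) R :=
  Matrix.of fun i j =>
    if (i : ℕ) < g.natDegree then
      (if (i : ℕ) ≤ (j : ℕ) then f.coeff ((j : ℕ) - (i : ℕ)) else 0)
    else
      (if (i : ℕ) - g.natDegree ≤ (j : ℕ) then
        g.coeff ((j : ℕ) - ((i : ℕ) - g.natDegree)) else 0)

/-- The resultant of two polynomials, as the determinant of their Sylvester matrix. -/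
noncomputable def resultantP {R : Type*} [CommRing R] (f g : R[X]) : R :=
  (sylvesterMatrix f g).det

instance decompositionMonoid_polynomial_powerSeries {K : Type*} [Field K] :
    DecompositionMonoid (Polynomial (PowerSeries K)) := inferInstance

/-- separated implies comparable, case `d = 1`: two reduced Weierstrass
polynomials `f, g ∈ k[[x]][z]` without common component (this is the separatedness
condition for plane curve germs) have resultant a monomial times a unit:
`Res_z(f,g)(x) = x^α·η(x)` with `η(0) ≠ 0`. -/
theorem separated_implies_comparable_curves (f g : Polynomial (PowerSeries k))
    (hfM : f.Monic) (hgM : g.Monic)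
    (hfW : ∀ i < f.natDegree, PowerSeries.constantCoeff (f.coeff i) = 0)
    (hgW : ∀ i < g.natDegree, PowerSeries.constantCoeff (g.coeff i) = 0)
    (hfred : Squarefree f) (hgred : Squarefree g)
    (hsep : ∀ h : Polynomial (PowerSeries k), h ∣ f → h ∣ g → IsUnit h) :
    resultantP f g ≠ 0 ∧
    ∃ (α : ℕ) (η : PowerSeries k), PowerSeries.constantCoeff η ≠ 0 ∧
      resultantP f g = PowerSeries.X ^ α * η := by

  classical
  set m := f.natDegree with hm
  set n := g.natDegree with hn
  have hr : resultantP f g ≠ 0 := by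
    intro h0
    obtain ⟨v, hv, hvM⟩ := Matrix.exists_vecMul_eq_zero_iff.mpr h0
    set w : ℕ → PowerSeries k := fun i => if h : i < m + n then v ⟨i, h⟩ else 0 with hw
    set a : Polynomial (PowerSeries k) := ∑ i ∈ Finset.range n, C (w i) * X ^ i with ha
    set b : Polynomial (PowerSeries k) := ∑ i ∈ Finset.range m, C (w (n + i)) * X ^ i with hb
    have hacoeff : ∀ t, a.coeff t = if t < n then w t else 0 := by
      intro t
      rw [ha, Polynomial.finset_sum_coeff]
      simp_rw [Polynomial.C_mul_X_pow_eq_monomial, Polynomial.coeff_monomial]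
      simp [Finset.sum_ite_eq, Finset.mem_range]
    have hbcoeff : ∀ t, b.coeff t = if t < m then w (n + t) else 0 := by
      intro t
      rw [hb, Polynomial.finset_sum_coeff]
      simp_rw [Polynomial.C_mul_X_pow_eq_monomial, Polynomial.coeff_monomial]
      simp [Finset.sum_ite_eq, Finset.mem_range]
    have haf : ∀ j, (a * f).coeff j
        = ∑ i ∈ Finset.range n, if i ≤ j then w i * f.coeff (j - i) else 0 := by
      intro j
      rw [ha, Finset.sum_mul, Polynomial.finset_sum_coeff]
      refine Finset.sum_congr rfl fun i _ => ?_
      rw [show C (w i) * X ^ i * f = C (w i) * f * X ^ i by ring,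
        Polynomial.coeff_mul_X_pow', Polynomial.coeff_C_mul]
    have hbg : ∀ j, (b * g).coeff j
        = ∑ i ∈ Finset.range m, if i ≤ j then w (n + i) * g.coeff (j - i) else 0 := by
      intro j
      rw [hb, Finset.sum_mul, Polynomial.finset_sum_coeff]
      refine Finset.sum_congr rfl fun i _ => ?_
      rw [show C (w (n + i)) * X ^ i * g = C (w (n + i)) * g * X ^ i by ring,
        Polynomial.coeff_mul_X_pow', Polynomial.coeff_C_mul]
    have key : a * f + b * g = 0 := by
      ext j
      rw [Polynomial.coeff_add, haf, hbg, Polynomial.coeff_zero]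
      by_cases hj : j < m + n
      · have hz := congrFun hvM ⟨j, hj⟩
        have hz' : ∑ i : Fin (m + n), v i * sylvesterMatrix f g i ⟨j, hj⟩ = 0 := by
          simpa [Matrix.vecMul, dotProduct] using hz
        have hconv : ∑ i : Fin (m + n), v i * sylvesterMatrix f g i ⟨j, hj⟩
            = ∑ i ∈ Finset.range (m + n), (w i *
              (if i < n then (if i ≤ j then f.coeff (j - i) else 0)
               else (if i - n ≤ j then g.coeff (j - (i - n)) else 0))) := by
          rw [← Fin.sum_univ_eq_sum_range]
          refine Finset.sum_congr rfl fun i _ => ?_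
          rw [hw]
          simp only [i.isLt, dif_pos]
          rfl
        have hsplit : ∑ i ∈ Finset.range (m + n), (w i *
              (if i < n then (if i ≤ j then f.coeff (j - i) else 0)
               else (if i - n ≤ j then g.coeff (j - (i - n)) else 0)))
            = (∑ i ∈ Finset.range n, if i ≤ j then w i * f.coeff (j - i) else 0)
            + ∑ i ∈ Finset.range m, if i ≤ j then w (n + i) * g.coeff (j - i) else 0 := by
          rw [show m + n = n + m from add_comm m n, Finset.sum_range_add]
          congr 1
          · refine Finset.sum_congr rfl fun i hi => ?_
            rw [if_pos (Finset.mem_range.mp hi), mul_ite, mul_zero]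
          · refine Finset.sum_congr rfl fun i hi => ?_
            have h1 : ¬ (n + i < n) := by omega
            have h2 : n + i - n = i := by omega
            rw [if_neg h1, h2, mul_ite, mul_zero]
        rw [← hsplit, ← hconv, hz']
      · have e1 : ∀ i ∈ Finset.range n,
            (if i ≤ j then w i * f.coeff (j - i) else 0) = 0 := by
          intro i hi
          have hi' := Finset.mem_range.mp hi
          split
          · have : f.natDegree < j - i := by omega
            rw [Polynomial.coeff_eq_zero_of_natDegree_lt this, mul_zero]
          · rfl
        have e2 : ∀ i ∈ Finset.range m,
            (if i ≤ j then w (n + i) * g.coeff (j - i) else 0) = 0 := by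
          intro i hi
          have hi' := Finset.mem_range.mp hi
          split
          · have : g.natDegree < j - i := by omega
            rw [Polynomial.coeff_eq_zero_of_natDegree_lt this, mul_zero]
          · rfl
        rw [Finset.sum_congr rfl e1, Finset.sum_congr rfl e2, Finset.sum_const_zero,
          Finset.sum_const_zero, add_zero]
    have hrel : IsRelPrime f g := fun d hd hd' => hsep d hd hd'
    have hbg0 : b * g = f * (-a) := by linear_combination key
    have hdvd' : f ∣ g * b := by rw [mul_comm g b, hbg0]; exact Dvd.intro (-a) rfl
    have hfdvd : f ∣ b := hrel.dvd_of_dvd_mul_left hdvd' 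
    have hab0 : a = 0 ∧ b = 0 := by
      by_cases hb0 : b = 0
      · refine ⟨?_, hb0⟩
        have : a * f = 0 := by rw [hb0, zero_mul, add_zero] at key; exact key
        rcases mul_eq_zero.mp this with h | h
        · exact h
        · exact absurd h hfM.ne_zero
      · exfalso
        have hle : f.natDegree ≤ b.natDegree := Polynomial.natDegree_le_of_dvd hfdvd hb0
        have hlt : b.natDegree < m := by
          by_contra hge
          push_neg at hge
          have := hbcoeff b.natDegree
          rw [if_neg (by omega)] at this
          exact Polynomial.leadingCoeff_ne_zero.mpr hb0 this
        omega
    apply hv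
    funext i
    rcases hab0 with ⟨ha0, hb0⟩
    have hvw : v i = w (i : ℕ) := by rw [hw]; dsimp only; rw [dif_pos (show (i : ℕ) < m + n from i.isLt)]
    by_cases hin : (i : ℕ) < n
    · have := hacoeff (i : ℕ)
      rw [ha0, Polynomial.coeff_zero, if_pos hin] at this
      rw [Pi.zero_apply, hvw, ← this]
    · have hisub : (i : ℕ) - n < m := by have := i.isLt; omega
      have := hbcoeff ((i : ℕ) - n)
      rw [hb0, Polynomial.coeff_zero, if_pos hisub] at this
      have hni : n + ((i : ℕ) - n) = (i : ℕ) := by omega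
      rw [Pi.zero_apply, hvw, ← hni, ← this]
  refine ⟨hr, ?_⟩
  have ho : (resultantP f g).order < ⊤ := PowerSeries.order_finite_iff_ne_zero.mpr hr
  obtain ⟨η, hη⟩ := (PowerSeries.X_pow_order_dvd : _ ∣ resultantP f g)
  refine ⟨(resultantP f g).order.toNat, η, ?_, hη⟩
  intro hc0
  apply PowerSeries.coeff_order hr
  have h2 := PowerSeries.coeff_X_pow_mul η ((resultantP f g).order.toNat) 0
  rw [zero_add] at h2
  have h3 := congrArg (PowerSeries.coeff ((resultantP f g).order.toNat)) hη
  rw [h2] at h3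
  rw [h3, PowerSeries.coeff_zero_eq_constantCoeff]
  exact hc0
end
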